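/- Pregames form a category: there is a category whose objects are pairs of sets (X,R) and whose morphisms (X,S) → (Y,R) are pregames (taken up to the canonical isomorphisms of strategy sets Σ × 1 ≅ Σ ≅ 1 × Σ and (Σ₁ × Σ₂) × Σ₃ ≅ Σ₁ × (Σ₂ × Σ₃)), with the identity pregame as identity and the given composition. -/

import Mathlib

/-- A pregame `G : X ⊗ S* → Y ⊗ R*`: a set of strategy profiles, a play
function, a coplay function and an individual rationality relation. -/
structure Pregame (X S Y R : Type) : Type 1 where
  Strat : Type
  play : Strat → X → Y
  coplay : Strat → X × R → S
  rat : Strat → X × (Y → R) → Prop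

namespace Pregame

/-- Composition of pregames: `comp G H = H ∘ G`. -/
def comp {X T Y S Z R : Type} (G : Pregame X T Y S) (H : Pregame Y S Z R) :
    Pregame X T Z R where
  Strat := G.Strat × H.Strat
  play σ x := H.play σ.2 (G.play σ.1 x)
  coplay σ xr := G.coplay σ.1 (xr.1, H.coplay σ.2 (G.play σ.1 xr.1, xr.2))
  rat σ xk :=
    G.rat σ.1 (xk.1, fun y => H.coplay σ.2 (y, xk.2 (H.play σ.2 y))) ∧
    H.rat σ.2 (G.play σ.1 xk.1, xk.2)

/-- Tensor (monoidal) product of pregames. -/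
def tensor {X₁ S₁ Y₁ R₁ X₂ S₂ Y₂ R₂ : Type}
    (G : Pregame X₁ S₁ Y₁ R₁) (H : Pregame X₂ S₂ Y₂ R₂) :
    Pregame (X₁ × X₂) (S₁ × S₂) (Y₁ × Y₂) (R₁ × R₂) where
  Strat := G.Strat × H.Strat
  play σ x := (G.play σ.1 x.1, H.play σ.2 x.2)
  coplay σ xr := (G.coplay σ.1 (xr.1.1, xr.2.1), H.coplay σ.2 (xr.1.2, xr.2.2))
  rat σ xk :=
    G.rat σ.1 (xk.1.1, fun y₁ => (xk.2 (y₁, H.play σ.2 xk.1.2)).1) ∧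
    H.rat σ.2 (xk.1.2, fun y₂ => (xk.2 (G.play σ.1 xk.1.1, y₂)).2)

/-- The identity pregame on `X ⊗ R*`. -/
def idP (X R : Type) : Pregame X R X R :=
  ⟨Unit, fun _ x => x, fun _ xr => xr.2, fun _ _ => True⟩

/-- A function viewed covariantly as a computation pregame. -/
def covariant {X Y : Type} (f : X → Y) : Pregame X Unit Y Unit :=
  ⟨Unit, fun _ => f, fun _ _ => (), fun _ _ => True⟩

/-- A function viewed contravariantly as a computation pregame `f* : Y* → X*`. -/
def contravariant {X Y : Type} (f : X → Y) : Pregame Unit Y Unit X :=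
  ⟨Unit, fun _ _ => (), fun _ ux => f ux.2, fun _ _ => True⟩

/-- The teleological unit `τ_X : X ⊗ X* → 1`. -/
def tele (X : Type) : Pregame X X Unit Unit :=
  ⟨Unit, fun _ _ => (), fun _ xu => xu.1, fun _ _ => True⟩

/-- A pair of computations `f ⊗ g*` (a purely structural pregame: trivial
strategies, play `f`, coplay `g`, rationality always true).  Used for the
canonical structural isomorphisms which the paper treats as identities. -/
def iso {X S Y R : Type} (f : X → Y) (g : R → S) : Pregame X S Y R :=
  ⟨Unit, fun _ => f, fun _ xr => g xr.2, fun _ _ => True⟩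

end Pregame

namespace Pregame

/-- Two pregames are equivalent (equal in the sense of the paper) when their
strategy sets are related by a canonical bijection under which the play,
coplay and individual rationality data agree. -/
def Equiv' {X S Y R : Type} (G G' : Pregame X S Y R) : Prop :=
  ∃ e : G.Strat ≃ G'.Strat,
    (∀ σ, G'.play (e σ) = G.play σ) ∧
    (∀ σ, G'.coplay (e σ) = G.coplay σ) ∧
    (∀ σ c, G'.rat (e σ) c ↔ G.rat σ c)

theorem equiv'_refl {X S Y R : Type} (G : Pregame X S Y R) : Equiv' G G :=
  ⟨Equiv.refl _, fun _ => rfl, fun _ => rfl, fun _ _ => Iff.rfl⟩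

theorem equiv'_symm {X S Y R : Type} {G G' : Pregame X S Y R}
    (h : Equiv' G G') : Equiv' G' G := by
  obtain ⟨e, hp, hc, hr⟩ := h
  exact ⟨e.symm,
    fun σ => by rw [← hp (e.symm σ), e.apply_symm_apply],
    fun σ => by rw [← hc (e.symm σ), e.apply_symm_apply],
    fun σ c => by rw [← hr (e.symm σ), e.apply_symm_apply]⟩

theorem equiv'_trans {X S Y R : Type} {G G' G'' : Pregame X S Y R}
    (h : Equiv' G G') (h' : Equiv' G' G'') : Equiv' G G'' := by
  obtain ⟨e, hp, hc, hr⟩ := h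
  obtain ⟨e', hp', hc', hr'⟩ := h'
  exact ⟨e.trans e',
    fun σ => by simp [hp' (e σ), hp σ],
    fun σ => by simp [hc' (e σ), hc σ],
    fun σ c => by simp [hr' (e σ) c, hr σ c]⟩

instance pregameSetoid (X S Y R : Type) : Setoid (Pregame X S Y R) :=
  ⟨Equiv', equiv'_refl, equiv'_symm, equiv'_trans⟩

theorem comp_congr {X T Y S Z R : Type} {G G' : Pregame X T Y S}
    {H H' : Pregame Y S Z R} (hG : Equiv' G G') (hH : Equiv' H H') :
    Equiv' (G.comp H) (G'.comp H') := by
  obtain ⟨e₁, p₁, c₁, r₁⟩ := hG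
  obtain ⟨e₂, p₂, c₂, r₂⟩ := hH
  refine ⟨e₁.prodCongr e₂, fun σ => ?_, fun σ => ?_, fun σ c => ?_⟩
  · obtain ⟨a, b⟩ := σ; funext x
    change H'.play (e₂ b) (G'.play (e₁ a) x) = _
    simp only [p₁, p₂]
    rfl
  · obtain ⟨a, b⟩ := σ; funext xr
    change G'.coplay (e₁ a) (xr.1, H'.coplay (e₂ b) (G'.play (e₁ a) xr.1, xr.2)) = _
    simp only [p₁, c₁, c₂]
    rfl
  · obtain ⟨a, b⟩ := σ
    change G'.rat (e₁ a) (c.1, fun y => H'.coplay (e₂ b) (y, c.2 (H'.play (e₂ b) y))) ∧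
      H'.rat (e₂ b) (G'.play (e₁ a) c.1, c.2) ↔ _
    simp only [r₁, r₂, p₁, p₂, c₂]
    rfl

end Pregame

/-- Objects of the category of pregames: pairs of sets. -/
def PregameObj : Type 1 := Type × Type

/-- Morphisms are pregames taken up to the canonical isomorphisms of strategy
sets; identity and composition are the given ones. -/
instance : CategoryTheory.CategoryStruct PregameObj where
  Hom A B := Quotient (Pregame.pregameSetoid A.1 A.2 B.1 B.2)
  id A := ⟦Pregame.idP A.1 A.2⟧
  comp f g := Quotient.map₂ Pregame.comp
    (fun _ _ h _ _ h' => Pregame.comp_congr h h') f g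

open CategoryTheory

/-- Pregames form a category: the identity pregame is a left and right
identity and composition is associative (up to the canonical isomorphisms of
strategy sets, i.e. as equalities of equivalence classes). -/
theorem pregame_category :
    (∀ (A B : PregameObj) (f : A ⟶ B), 𝟙 A ≫ f = f) ∧
    (∀ (A B : PregameObj) (f : A ⟶ B), f ≫ 𝟙 B = f) ∧
    (∀ (A B C D : PregameObj) (f : A ⟶ B) (g : B ⟶ C) (h : C ⟶ D),
      (f ≫ g) ≫ h = f ≫ (g ≫ h)) := by
  refine ⟨fun A B f => ?_, fun A B f => ?_, fun A B C D f g h => ?_⟩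
  · induction f using Quotient.inductionOn with
    | h G =>
      apply Quotient.sound
      exact ⟨Equiv.punitProd _, fun σ => rfl, fun σ => rfl, fun σ c => by
        obtain ⟨u, s⟩ := σ
        simp [Pregame.comp, Pregame.idP]
        exact Iff.rfl⟩
  · induction f using Quotient.inductionOn with
    | h G =>
      apply Quotient.sound
      exact ⟨Equiv.prodPUnit _, fun σ => rfl, fun σ => rfl, fun σ c => by
        obtain ⟨s, u⟩ := σ
        simp [Pregame.comp, Pregame.idP]
        exact Iff.rfl⟩
  · induction f using Quotient.inductionOn with
    | h G =>
    induction g using Quotient.inductionOn with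
    | h H =>
    induction h using Quotient.inductionOn with
    | h K =>
      apply Quotient.sound
      exact ⟨Equiv.prodAssoc _ _ _, fun σ => rfl, fun σ => rfl, fun σ c => by
        obtain ⟨⟨a, b⟩, d⟩ := σ
        simp [Pregame.comp, and_assoc]
        exact Iff.rfl⟩
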